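/- arXiv:1802.08444 — 4 statements merged into one kernel-verified Lean document; each statement's English description precedes it below -/
import Mathlib

section
/- If N = p₁·p₂ is a product of two distinct odd primes, then φ(N) = λ(N) · gcd(N − 1, λ(N)). -/
/-- The Carmichael function: the exponent of the multiplicative group `(ZMod n)ˣ`. -/
noncomputable def carmichael (n : ℕ) : ℕ := Monoid.exponent (ZMod n)ˣ

lemma gcd_lcm_distrib_aux (a b c : ℕ) (ha : a ≠ 0) (hb : b ≠ 0) (hc : c ≠ 0) :
    Nat.gcd c (Nat.lcm a b) = Nat.lcm (Nat.gcd c a) (Nat.gcd c b) := by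
  have hl : Nat.lcm a b ≠ 0 := Nat.lcm_ne_zero ha hb
  have hca : Nat.gcd c a ≠ 0 := fun h => hc (Nat.eq_zero_of_gcd_eq_zero_left h)
  have hcb : Nat.gcd c b ≠ 0 := fun h => hc (Nat.eq_zero_of_gcd_eq_zero_left h)
  apply Nat.eq_of_factorization_eq
  · exact fun h => hc (Nat.eq_zero_of_gcd_eq_zero_left h)
  · exact Nat.lcm_ne_zero hca hcb
  intro p
  rw [Nat.factorization_gcd hc hl, Nat.factorization_lcm ha hb,
    Nat.factorization_lcm hca hcb, Nat.factorization_gcd hc ha,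
    Nat.factorization_gcd hc hb, Finsupp.inf_apply, Finsupp.sup_apply,
    Finsupp.sup_apply, Finsupp.inf_apply, Finsupp.inf_apply]
  exact inf_sup_left _ _ _

lemma exponent_units_prime (p : ℕ) (hp : p.Prime) :
    Monoid.exponent (ZMod p)ˣ = p - 1 := by
  haveI : Fact p.Prime := ⟨hp⟩
  rw [IsCyclic.exponent_eq_card, Nat.card_eq_fintype_card,
    ZMod.card_units_eq_totient, Nat.totient_prime hp]

theorem totient_eq_carmichael_mul_gcd (p₁ p₂ N : ℕ) (hp₁ : p₁.Prime) (hp₂ : p₂.Prime)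
    (hodd₁ : Odd p₁) (hodd₂ : Odd p₂) (hne : p₁ ≠ p₂) (hN : N = p₁ * p₂) :
    Nat.totient N = carmichael N * Nat.gcd (N - 1) (carmichael N) := by
  subst hN
  have hcop : Nat.Coprime p₁ p₂ := (Nat.coprime_primes hp₁ hp₂).mpr hne
  set a := p₁ - 1 with ha_def
  set b := p₂ - 1 with hb_def
  have ha0 : a ≠ 0 := by have := hp₁.two_le; omega
  have hb0 : b ≠ 0 := by have := hp₂.two_le; omega
  -- carmichael = lcm a b
  have hcar : carmichael (p₁ * p₂) = Nat.lcm a b := by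
    have e : (ZMod (p₁ * p₂))ˣ ≃* (ZMod p₁)ˣ × (ZMod p₂)ˣ :=
      (Units.mapEquiv (ZMod.chineseRemainder hcop).toMulEquiv).trans MulEquiv.prodUnits
    rw [carmichael, Monoid.exponent_eq_of_mulEquiv e, Monoid.exponent_prod,
      exponent_units_prime p₁ hp₁, exponent_units_prime p₂ hp₂]
    rfl
  -- totient = a * b
  have htot : Nat.totient (p₁ * p₂) = a * b := by
    rw [Nat.totient_mul hcop, Nat.totient_prime hp₁, Nat.totient_prime hp₂]
  -- decompositions of N - 1
  obtain ⟨k, hk⟩ : ∃ k, p₁ = k + 1 := ⟨p₁ - 1, by have := hp₁.two_le; omega⟩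
  obtain ⟨l, hl⟩ : ∃ l, p₂ = l + 1 := ⟨p₂ - 1, by have := hp₂.two_le; omega⟩
  have hsplit1 : p₁ * p₂ - 1 = b + p₂ * a := by
    subst hk hl; simp only [ha_def, hb_def, Nat.add_sub_cancel]; ring_nf; omega
  have hsplit2 : p₁ * p₂ - 1 = a + p₁ * b := by
    subst hk hl; simp only [ha_def, hb_def, Nat.add_sub_cancel]; ring_nf; omega
  set g := Nat.gcd (p₁ * p₂ - 1) (Nat.lcm a b) with hg_def
  have hg_lcm : g ∣ Nat.lcm a b := Nat.gcd_dvd_right _ _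
  have hg_N : g ∣ p₁ * p₂ - 1 := Nat.gcd_dvd_left _ _
  have hgcdA : Nat.gcd (p₁ * p₂ - 1) a = Nat.gcd a b := by
    rw [hsplit1, Nat.gcd_add_mul_right_left, Nat.gcd_comm]
  have hgcdB : Nat.gcd (p₁ * p₂ - 1) b = Nat.gcd a b := by
    rw [hsplit2, Nat.gcd_add_mul_right_left]
  have hg0 : g ≠ 0 := fun h => by
    have h1 := Nat.eq_zero_of_gcd_eq_zero_left h
    have h4 : 2 * 2 ≤ p₁ * p₂ := Nat.mul_le_mul hp₁.two_le hp₂.two_le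
    omega
  have hgd : g ∣ Nat.gcd a b := by
    have hge : g = Nat.lcm (Nat.gcd g a) (Nat.gcd g b) := by
      rw [← gcd_lcm_distrib_aux a b g ha0 hb0 hg0, Nat.gcd_eq_left hg_lcm]
    rw [hge]
    apply Nat.lcm_dvd
    · rw [← hgcdA]; exact Nat.dvd_gcd ((Nat.gcd_dvd_left g a).trans hg_N) (Nat.gcd_dvd_right g a)
    · rw [← hgcdB]; exact Nat.dvd_gcd ((Nat.gcd_dvd_left g b).trans hg_N) (Nat.gcd_dvd_right g b)
  have hdg : Nat.gcd a b ∣ g := by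
    apply Nat.dvd_gcd
    · rw [hsplit1]
      exact Nat.dvd_add (Nat.gcd_dvd_right a b) ((Nat.gcd_dvd_left a b).mul_left _)
    · exact (Nat.gcd_dvd_left a b).trans (Nat.dvd_lcm_left a b)
  have hged : g = Nat.gcd a b := Nat.dvd_antisymm hgd hdg
  rw [htot, hcar, ← hg_def, hged, Nat.mul_comm (Nat.lcm a b), Nat.gcd_mul_lcm]
end

section
/- If N = p₁p₂ with p₁, p₂ distinct primes, p₁−1 = g·q₁, p₂−1 = g·q₂ where g = gcd(p₁−1, p₂−1), then gcd(N−1, λ(N)) = g, where λ(N) = g·q₁·q₂. -/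
theorem gcd_pred_lcm_eq (p₁ p₂ N g q₁ q₂ : ℕ) (hp₁ : p₁.Prime) (hp₂ : p₂.Prime)
    (hne : p₁ ≠ p₂) (hN : N = p₁ * p₂) (hg : g = Nat.gcd (p₁ - 1) (p₂ - 1))
    (hq₁ : p₁ - 1 = g * q₁) (hq₂ : p₂ - 1 = g * q₂) :
    Nat.lcm (p₁ - 1) (p₂ - 1) = g * q₁ * q₂ ∧
      Nat.gcd (N - 1) (Nat.lcm (p₁ - 1) (p₂ - 1)) = g := by
  have hp1 : 2 ≤ p₁ := hp₁.two_le
  have hp2 : 2 ≤ p₂ := hp₂.two_le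
  have hg0 : 0 < g := by
    rw [hg]; exact Nat.gcd_pos_of_pos_left _ (by omega)
  have hcop : Nat.Coprime q₁ q₂ := by
    have h : g * Nat.gcd q₁ q₂ = g * 1 := by
      rw [← Nat.gcd_mul_left, ← hq₁, ← hq₂, ← hg, mul_one]
    exact Nat.eq_of_mul_eq_mul_left hg0 h
  have hlcm : Nat.lcm (p₁ - 1) (p₂ - 1) = g * q₁ * q₂ := by
    have h := Nat.gcd_mul_lcm (p₁ - 1) (p₂ - 1)
    rw [← hg] at h
    have h2 : g * Nat.lcm (p₁ - 1) (p₂ - 1) = g * (g * q₁ * q₂) := by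
      rw [h, hq₁, hq₂]; ring
    exact Nat.eq_of_mul_eq_mul_left hg0 h2
  refine ⟨hlcm, ?_⟩
  have e1 : p₁ = g * q₁ + 1 := by omega
  have e2 : p₂ = g * q₂ + 1 := by omega
  have hN1 : N - 1 = g * (g * q₁ * q₂ + q₁ + q₂) := by
    subst hN; rw [e1, e2]
    have : (g * q₁ + 1) * (g * q₂ + 1) = g * (g * q₁ * q₂ + q₁ + q₂) + 1 := by ring
    omega
  rw [hlcm, hN1, mul_assoc g q₁ q₂, Nat.gcd_mul_left]
  suffices h : Nat.gcd (g * (q₁ * q₂) + q₁ + q₂) (q₁ * q₂) = 1 by rw [h, mul_one]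
  have c1 : Nat.Coprime (g * (q₁ * q₂) + q₁ + q₂) q₁ := by
    have e : g * (q₁ * q₂) + q₁ + q₂ = q₂ + q₁ * (g * q₂ + 1) := by ring
    rw [e]; exact (Nat.coprime_add_mul_left_left q₂ q₁ (g * q₂ + 1)).mpr hcop.symm
  have c2 : Nat.Coprime (g * (q₁ * q₂) + q₁ + q₂) q₂ := by
    have e : g * (q₁ * q₂) + q₁ + q₂ = q₁ + q₂ * (g * q₁ + 1) := by ring
    rw [e]; exact (Nat.coprime_add_mul_left_left q₁ q₂ (g * q₁ + 1)).mpr hcop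
  exact Nat.Coprime.mul_right c1 c2
end

section
/- Let A < B be positive integers and suppose D divides B, D divides A + x, D > B^α and |x| < B^{2α−1}/2 for some real α > 1/2. Writing a' = (A+x)/D and b' = B/D, we have |A/B − a'/b'| < 1/(2·b'²); hence a'/b' is a convergent of the continued fraction expansion of A/B. -/
theorem approx_gcd_convergent (A B D x a' b' : ℤ) (α : ℝ)
    (hA : 0 < A) (hAB : A < B) (hDB : D ∣ B) (hDx : D ∣ A + x)
    (hα : 1 / 2 < α) (hα1 : α ≤ 1)
    (hD : (B : ℝ) ^ α < (D : ℝ))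
    (hx : |(x : ℝ)| < (B : ℝ) ^ (2 * α - 1) / 2)
    (ha' : A + x = D * a') (hb' : B = D * b') :
    |(A : ℝ) / (B : ℝ) - (a' : ℝ) / (b' : ℝ)| < 1 / (2 * (b' : ℝ) ^ 2) ∧
      ∃ n : ℕ, (GenContFract.of ((A : ℝ) / (B : ℝ))).convs n = (a' : ℝ) / (b' : ℝ) := by
  have hB0 : (0 : ℝ) < (B : ℝ) := by exact_mod_cast hA.trans hAB
  have hBα : (0 : ℝ) < (B : ℝ) ^ α := Real.rpow_pos_of_pos hB0 α
  have hD0 : (0 : ℝ) < (D : ℝ) := lt_trans hBα hD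
  have hDbB : (D : ℝ) * (b' : ℝ) = (B : ℝ) := by exact_mod_cast hb'.symm
  have hb'0 : (0 : ℝ) < (b' : ℝ) := by nlinarith
  -- b' < B^(1-α)
  have hb'lt : (b' : ℝ) < (B : ℝ) ^ (1 - α) := by
    have h1 : (b' : ℝ) * (B : ℝ) ^ α < (B : ℝ) ^ (1 - α) * (B : ℝ) ^ α := by
      rw [← Real.rpow_add hB0]
      have : (1 - α) + α = 1 := by ring
      rw [this, Real.rpow_one]
      nlinarith
    exact lt_of_mul_lt_mul_right h1 hBα.le
  -- key inequality
  have hkey : 2 * (b' : ℝ) ^ 2 * |(x : ℝ)| < (B : ℝ) := by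
    have hsq : (b' : ℝ) ^ 2 < ((B : ℝ) ^ (1 - α)) ^ 2 := by nlinarith
    have hprod : ((B : ℝ) ^ (1 - α)) ^ 2 * ((B : ℝ) ^ (2 * α - 1)) = (B : ℝ) := by
      rw [← Real.rpow_natCast ((B : ℝ) ^ (1 - α)) 2, ← Real.rpow_mul hB0.le,
        ← Real.rpow_add hB0]
      push_cast
      rw [show (1 - α) * 2 + (2 * α - 1) = 1 by ring, Real.rpow_one]
    have hx0 : (0 : ℝ) ≤ |(x : ℝ)| := abs_nonneg _
    nlinarith [Real.rpow_pos_of_pos hB0 (2 * α - 1), Real.rpow_pos_of_pos hB0 (1 - α)]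
  -- the difference equals x/B in absolute value
  have hfrac : (a' : ℝ) / (b' : ℝ) = ((A : ℝ) + (x : ℝ)) / (B : ℝ) := by
    rw [← hDbB]
    have : ((A : ℝ) + (x : ℝ)) = (D : ℝ) * (a' : ℝ) := by exact_mod_cast ha'
    rw [this, mul_div_mul_left _ _ hD0.ne']
  have hdiff : |(A : ℝ) / (B : ℝ) - (a' : ℝ) / (b' : ℝ)| = |(x : ℝ)| / (B : ℝ) := by
    rw [hfrac]
    rw [div_sub_div_same, show (A : ℝ) - ((A : ℝ) + (x : ℝ)) = -(x : ℝ) by ring,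
      abs_div, abs_neg, abs_of_pos hB0]
  have hmain : |(A : ℝ) / (B : ℝ) - (a' : ℝ) / (b' : ℝ)| < 1 / (2 * (b' : ℝ) ^ 2) := by
    rw [hdiff, div_lt_div_iff₀ hB0 (by positivity)]
    nlinarith
  refine ⟨hmain, ?_⟩
  -- use Legendre's theorem
  set q : ℚ := (a' : ℚ) / (b' : ℚ) with hq
  have hqcast : ((q : ℚ) : ℝ) = (a' : ℝ) / (b' : ℝ) := by push_cast [hq]; ring
  have hdenle : ((q.den : ℤ)) ≤ b' := by
    have hdvd : ((q.den : ℤ)) ∣ b' := by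
      have := Rat.den_dvd a' b'
      rwa [Rat.divInt_eq_div] at this
    exact Int.le_of_dvd (by exact_mod_cast hb'0) hdvd
  have hlt : |(A : ℝ) / (B : ℝ) - (q : ℝ)| < 1 / (2 * (q.den : ℝ) ^ 2) := by
    rw [hqcast]
    refine hmain.trans_le ?_
    have hden0 : (0 : ℝ) < (q.den : ℝ) := by exact_mod_cast q.pos
    have : (q.den : ℝ) ≤ (b' : ℝ) := by exact_mod_cast hdenle
    apply one_div_le_one_div_of_le (by positivity)
    nlinarith
  obtain ⟨n, hn⟩ := Real.exists_convs_eq_rat hlt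
  exact ⟨n, by rw [hn, hqcast]⟩
end

section
/- Let N = p₁p₂ be a product of two distinct strong primes pᵢ = 2qᵢ+1 (qᵢ odd prime), and let r be the multiplicative order of 2 modulo N with N > 5. Let r' = r if r is odd and r' = r/2 otherwise. Then r' ∈ {1, q₁, q₂, q₁q₂}; moreover if r' is prime then 2r'+1 is one of p₁, p₂ and divides N. -/
lemma dvd_prime_mul' {p q d : ℕ} (hp : p.Prime) (hq : q.Prime) (_hne : p ≠ q)
    (hd : d ∣ p * q) : d = 1 ∨ d = p ∨ d = q ∨ d = p * q := by
  by_cases hpd : p ∣ d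
  · obtain ⟨e, rfl⟩ := hpd
    have he : e ∣ q := (mul_dvd_mul_iff_left hp.pos.ne').mp hd
    rcases (Nat.dvd_prime hq).mp he with rfl | rfl
    · right; left; simp
    · right; right; right; rfl
  · have hcop : Nat.Coprime d p := (hp.coprime_iff_not_dvd.mpr hpd).symm
    have : d ∣ q := hcop.dvd_of_dvd_mul_left hd
    rcases (Nat.dvd_prime hq).mp this with rfl | rfl
    · left; rfl
    · right; right; left; rfl

theorem order_of_two_strong_primes (p₁ p₂ q₁ q₂ N : ℕ)
    (hp₁ : p₁.Prime) (hp₂ : p₂.Prime) (hq₁ : q₁.Prime) (hq₂ : q₂.Prime)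
    (hoq₁ : Odd q₁) (hoq₂ : Odd q₂) (hqne : q₁ ≠ q₂)
    (h₁ : p₁ = 2 * q₁ + 1) (h₂ : p₂ = 2 * q₂ + 1) (hN : N = p₁ * p₂) (hN5 : 5 < N)
    (r r' : ℕ) (hr : r = orderOf (2 : ZMod N))
    (hr' : r' = if Odd r then r else r / 2) :
    r' ∈ ({1, q₁, q₂, q₁ * q₂} : Set ℕ) ∧
      (r'.Prime → (2 * r' + 1 = p₁ ∨ 2 * r' + 1 = p₂) ∧ (2 * r' + 1) ∣ N) := by
  subst hN h₁ h₂ hr hr'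
  have hq₁2 := hq₁.two_le
  have hq₂2 := hq₂.two_le
  have hpne : (2 * q₁ + 1) ≠ (2 * q₂ + 1) := by omega
  have hcop : Nat.Coprime (2 * q₁ + 1) (2 * q₂ + 1) :=
    (Nat.coprime_primes hp₁ hp₂).mpr hpne
  set P₁ := 2 * q₁ + 1 with hP₁
  set P₂ := 2 * q₂ + 1 with hP₂
  have e := ZMod.chineseRemainder hcop
  -- transfer order through CRT
  have he2 : e (2 : ZMod (P₁ * P₂)) = (2 : ZMod P₁ × ZMod P₂) := map_ofNat e 2
  have horder : orderOf (2 : ZMod (P₁ * P₂)) = orderOf ((2 : ZMod P₁ × ZMod P₂)) := by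
    rw [← he2]
    exact (orderOf_injective e.toRingHom.toMonoidHom e.injective 2).symm
  have h2ne₁ : (2 : ZMod P₁) ≠ 0 := by
    have : ¬ (P₁ ∣ 2) := by
      intro h; have := Nat.le_of_dvd (by norm_num) h; omega
    simpa [Nat.cast_ofNat] using
      (fun h => this ((ZMod.natCast_eq_zero_iff 2 P₁).mp (by exact_mod_cast h)))
  have h2ne₂ : (2 : ZMod P₂) ≠ 0 := by
    have : ¬ (P₂ ∣ 2) := by
      intro h; have := Nat.le_of_dvd (by norm_num) h; omega
    simpa [Nat.cast_ofNat] using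
      (fun h => this ((ZMod.natCast_eq_zero_iff 2 P₂).mp (by exact_mod_cast h)))
  haveI : Fact P₁.Prime := ⟨hp₁⟩
  haveI : Fact P₂.Prime := ⟨hp₂⟩
  have ho₁ : orderOf (2 : ZMod P₁) ∣ 2 * q₁ := by
    have := ZMod.pow_card_sub_one_eq_one h2ne₁
    have h' : P₁ - 1 = 2 * q₁ := by omega
    rw [h'] at this
    exact orderOf_dvd_of_pow_eq_one this
  have ho₂ : orderOf (2 : ZMod P₂) ∣ 2 * q₂ := by
    have := ZMod.pow_card_sub_one_eq_one h2ne₂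
    have h' : P₂ - 1 = 2 * q₂ := by omega
    rw [h'] at this
    exact orderOf_dvd_of_pow_eq_one this
  have hprod : orderOf ((2 : ZMod P₁ × ZMod P₂)) =
      Nat.lcm (orderOf (2 : ZMod P₁)) (orderOf (2 : ZMod P₂)) := by
    have : ((2 : ZMod P₁ × ZMod P₂)) = ((2 : ZMod P₁), (2 : ZMod P₂)) := rfl
    rw [this, Prod.orderOf]
  have hrdvd : orderOf (2 : ZMod (P₁ * P₂)) ∣ 2 * (q₁ * q₂) := by
    rw [horder, hprod]
    exact Nat.lcm_dvd (ho₁.trans ⟨q₂, by ring⟩) (ho₂.trans ⟨q₁, by ring⟩)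
  set R := orderOf (2 : ZMod (P₁ * P₂)) with hR
  have hr'dvd : (if Odd R then R else R / 2) ∣ q₁ * q₂ := by
    by_cases h : Odd R
    · rw [if_pos h]
      have hnd : ¬ 2 ∣ R := by
        have := Nat.odd_iff.mp h; omega
      have hc : Nat.Coprime R 2 := (Nat.prime_two.coprime_iff_not_dvd.mpr hnd).symm
      exact hc.dvd_of_dvd_mul_left hrdvd
    · rw [if_neg h]
      have h2 : 2 ∣ R := by
        rcases Nat.even_or_odd R with he | ho
        · exact he.two_dvd
        · exact absurd ho h
      obtain ⟨k, hk⟩ := h2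
      rw [hk] at hrdvd
      have hkd : k ∣ q₁ * q₂ := (mul_dvd_mul_iff_left (two_ne_zero)).mp hrdvd
      have hdiv : R / 2 = k := by omega
      rw [hdiv]; exact hkd
  set R' := if Odd R then R else R / 2 with hR'
  have hcases := dvd_prime_mul' hq₁ hq₂ hqne hr'dvd
  constructor
  · rcases hcases with h | h | h | h <;> simp [h]
  · intro hpr
    rcases hcases with h | h | h | h
    · exact absurd (h ▸ hpr) Nat.not_prime_one
    · exact ⟨Or.inl (by rw [h]), by rw [h]; exact dvd_mul_right _ _⟩
    · exact ⟨Or.inr (by rw [h]), by rw [h]; exact dvd_mul_left _ _⟩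
    · exfalso
      rw [h, Nat.prime_mul_iff] at hpr
      rcases hpr with ⟨_, h1⟩ | ⟨_, h1⟩ <;> omega
end
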